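/- Let A be a unital C*-algebra, let x ∈ A be positive, and let q ∈ A be a projection such that ‖q x q − q‖ < 1. Then there exists s ∈ A with s* s = q and with s s* belonging to the closed linear span of {x a x : a ∈ A} (the hereditary subalgebra of A generated by x). In particular, q is Murray–von Neumann equivalent to a projection in that hereditary subalgebra. -/

import Mathlib

section Aux

private lemma aux_isUnit {A : Type*} [CStarAlgebra A] (q y : A) (hq : q * q = q)
    (hqy : q * y = y) (hyq : y * q = y) (lam : ℝ) (hl0 : lam ≠ 0)
    (hl1 : ‖q - y‖ < |lam - 1|) : IsUnit (algebraMap ℝ A lam - y) := by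
  have ht0 : lam - 1 ≠ 0 := by
    intro h0; rw [h0, abs_zero] at hl1; exact (norm_nonneg _).not_gt hl1
  set v : A := (lam - 1)⁻¹ • (q - y) with hv_def
  have hqsub : q * (q - y) = q - y := by rw [mul_sub, hq, hqy]
  have hsubq : (q - y) * q = q - y := by rw [sub_mul, hq, hyq]
  have hqv : q * v = v := by rw [hv_def, mul_smul_comm, hqsub]
  have hvq : v * q = v := by rw [hv_def, smul_mul_assoc, hsubq]
  have hvnorm : ‖v‖ < 1 := by
    rw [hv_def, norm_smul, norm_inv, Real.norm_eq_abs]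
    calc |lam - 1|⁻¹ * ‖q - y‖ = ‖q - y‖ / |lam - 1| := by ring
    _ < 1 := (div_lt_one (abs_pos.mpr ht0)).mpr hl1
  have hu : IsUnit ((1 : A) + v) := by
    have h1 : (1 : A) + v = 1 - (-v) := by rw [sub_neg_eq_add]
    rw [h1]; exact isUnit_one_sub_of_norm_lt_one (by rwa [norm_neg])
  set u : A := (1 : A) + v with hu_def
  set w : A := ↑hu.unit⁻¹ with hw_def
  have huw : u * w = 1 := hu.mul_val_inv
  have hwu : w * u = 1 := hu.val_inv_mul
  have hqu : q * u = u * q := by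
    rw [hu_def, mul_add, add_mul, mul_one, one_mul, hqv, hvq]
  have hqw : q * w = w * q := by
    calc q * w = w * (u * (q * w)) := by rw [← mul_assoc, hwu, one_mul]
    _ = w * (q * (u * w)) := by rw [← mul_assoc u q w, ← hqu, mul_assoc]
    _ = w * q := by rw [huw, mul_one]
  have huq : u * q = q + v := by rw [hu_def, add_mul, one_mul, hvq]
  have htv : (lam - 1) • v = q - y := by
    rw [hv_def, smul_smul, mul_inv_cancel₀ ht0, one_smul]
  have hM : algebraMap ℝ A lam - y
      = lam • ((1 : A) - q) + (lam - 1) • (u * q) := by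
    rw [Algebra.algebraMap_eq_smul_one, huq, smul_add, htv, smul_sub]
    module
  have hquq : q * (u * q) = u * q := by rw [← mul_assoc, hqu, mul_assoc, hq]
  have hqwq : q * (w * q) = w * q := by rw [← mul_assoc, hqw, mul_assoc, hq]
  have e1 : ((1:A) - q) * ((1:A) - q) = (1:A) - q := by
    rw [mul_sub, mul_one, sub_mul, one_mul, hq, sub_self, sub_zero]
  have e2 : ((1:A) - q) * (u * q) = 0 := by rw [sub_mul, one_mul, hquq, sub_self]
  have e3 : (w * q) * ((1:A) - q) = 0 := by rw [mul_sub, mul_one, mul_assoc, hq, sub_self]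
  have e4 : (w * q) * (u * q) = q := by rw [mul_assoc, hquq, ← mul_assoc, hwu, one_mul]
  have e5 : (u * q) * ((1:A) - q) = 0 := by rw [mul_sub, mul_one, mul_assoc, hq, sub_self]
  have e6 : ((1:A) - q) * (w * q) = 0 := by rw [sub_mul, one_mul, hqwq, sub_self]
  have e7 : (u * q) * (w * q) = q := by rw [mul_assoc, hqwq, ← mul_assoc, huw, one_mul]
  set Z : A := lam⁻¹ • ((1:A) - q) + (lam - 1)⁻¹ • (w * q) with hZ_def
  have hZM : Z * (algebraMap ℝ A lam - y) = 1 := by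
    rw [hM, hZ_def, add_mul, mul_add, mul_add,
        smul_mul_smul_comm, smul_mul_smul_comm, smul_mul_smul_comm, smul_mul_smul_comm,
        e1, e2, e3, e4, smul_zero, smul_zero, inv_mul_cancel₀ hl0, inv_mul_cancel₀ ht0,
        one_smul, one_smul, add_zero, zero_add, sub_add_cancel]
  have hMZ : (algebraMap ℝ A lam - y) * Z = 1 := by
    rw [hM, hZ_def, add_mul, mul_add, mul_add,
        smul_mul_smul_comm, smul_mul_smul_comm, smul_mul_smul_comm, smul_mul_smul_comm,
        e1, e6, e5, e7, smul_zero, smul_zero, mul_inv_cancel₀ hl0, mul_inv_cancel₀ ht0,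
        one_smul, one_smul, add_zero, zero_add, sub_add_cancel]
  exact isUnit_iff_exists.mpr ⟨Z, hMZ, hZM⟩

private lemma aux_spec {A : Type*} [CStarAlgebra A] (q y : A) (hq : q * q = q)
    (hqy : q * y = y) (hyq : y * q = y) {t : ℝ} (ht : t ∈ spectrum ℝ y) :
    t = 0 ∨ |t - 1| ≤ ‖q - y‖ := by
  by_contra hcon
  push_neg at hcon
  exact spectrum.mem_iff.mp ht (aux_isUnit q y hq hqy hyq t hcon.1 hcon.2)

end Aux

/-- Let `A` be a unital C*-algebra, `x ∈ A` positive, and `q ∈ A` a projection with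
`‖q x q − q‖ < 1`.  Then there is `s ∈ A` with `s* s = q` such that `s s*` is a projection
lying in the hereditary subalgebra of `A` generated by `x`, i.e. the closed linear span of
`{x a x : a ∈ A}`; in particular `q` is Murray–von Neumann equivalent to a projection in
that hereditary subalgebra. -/
theorem projection_mvN_into_hereditary
    {A : Type*} [NormedRing A] [StarRing A] [CStarRing A] [CompleteSpace A]
    [NormedAlgebra ℂ A] [StarModule ℂ A] [PartialOrder A] [StarOrderedRing A]
    (x : A) (hx : 0 ≤ x) (q : A) (hq_sa : IsSelfAdjoint q) (hq_idem : q * q = q)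
    (h : ‖q * x * q - q‖ < 1) :
    ∃ s : A, star s * s = q ∧
      IsSelfAdjoint (s * star s) ∧ (s * star s) * (s * star s) = s * star s ∧
      s * star s ∈ closure (Submodule.span ℂ {y : A | ∃ a : A, y = x * a * x} : Set A) := by
  letI : CStarAlgebra A := { }
  have hx_sa : IsSelfAdjoint x := IsSelfAdjoint.of_nonneg hx
  set y : A := q * x * q with hy_def
  have hy_sa : IsSelfAdjoint y := by
    have h1 := hx_sa.conjugate q
    rwa [hq_sa.star_eq] at h1
  have hqy : q * y = y := by rw [hy_def, ← mul_assoc, ← mul_assoc, hq_idem]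
  have hyq : y * q = y := by rw [hy_def, mul_assoc, hq_idem]
  set r : ℝ := ‖y - q‖ with hr_def
  have hr1 : r < 1 := h
  have hr0 : 0 ≤ r := norm_nonneg _
  set ε : ℝ := 1 - r with hε_def
  have hε : 0 < ε := by rw [hε_def]; linarith
  have hspec : ∀ t ∈ spectrum ℝ y, t = 0 ∨ ε ≤ t := by
    intro t ht
    rcases aux_spec q y hq_idem hqy hyq ht with h0 | h1
    · exact Or.inl h0
    · right
      rw [norm_sub_rev, ← hr_def] at h1
      have h2 := abs_le.mp h1
      rw [hε_def]
      linarith [h2.1]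
  -- the function defining the "inverse square root in the corner"
  set k : ℝ → ℝ := fun t => (Real.sqrt (max t ε))⁻¹ * (max t ε)⁻¹ with hk_def
  have hmax_cont : Continuous fun t : ℝ => max t ε := continuous_id.max continuous_const
  have hmne : ∀ t : ℝ, max t ε ≠ 0 := fun t => (lt_of_lt_of_le hε (le_max_right t ε)).ne'
  have hsne : ∀ t : ℝ, Real.sqrt (max t ε) ≠ 0 := fun t =>
    (Real.sqrt_pos.mpr (lt_of_lt_of_le hε (le_max_right t ε))).ne'
  have hk_cont : Continuous k := by
    rw [hk_def]
    exact ((Real.continuous_sqrt.comp hmax_cont).inv₀ hsne).mul (hmax_cont.inv₀ hmne)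
  set f : ℝ → ℝ := fun t => t * k t with hf_def
  have hf_cont : Continuous f := by rw [hf_def]; exact continuous_id.mul hk_cont
  set e : A := cfc f y with he_def
  have he_sa : IsSelfAdjoint e := cfc_predicate f y
  have he_r : e = y * cfc k y := by
    rw [he_def, hf_def,
      cfc_mul (fun t : ℝ => t) k y continuous_id.continuousOn hk_cont.continuousOn,
      cfc_id' ℝ y]
  have he_l : e = cfc k y * y := by
    rw [he_def, hf_def,
      show (fun t : ℝ => t * k t) = fun t => k t * t from funext fun t => mul_comm _ _,
      cfc_mul k (fun t : ℝ => t) y hk_cont.continuousOn continuous_id.continuousOn,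
      cfc_id' ℝ y]
  have heq : e * q = e := by rw [he_l, mul_assoc, hyq, ← he_l]
  have hqe : q * e = e := by rw [he_r, ← mul_assoc, hqy, ← he_r]
  -- `e * y * e = q`
  have hG_cont : Continuous fun t : ℝ => f t * t := hf_cont.mul continuous_id
  have a1 : cfc (fun t : ℝ => f t * t) y = e * y := by
    rw [cfc_mul f (fun t : ℝ => t) y hf_cont.continuousOn continuous_id.continuousOn,
      cfc_id' ℝ y, he_def]
  have hp_cfc : cfc (fun t : ℝ => f t * t * f t) y = e * y * e := by
    rw [cfc_mul (fun t : ℝ => f t * t) f y hG_cont.continuousOn hf_cont.continuousOn, a1,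
      he_def]
  have a2 : cfc (fun t : ℝ => f t * t * f t * t) y = cfc (fun t : ℝ => f t * t * f t) y * y := by
    rw [cfc_mul (fun t : ℝ => f t * t * f t) (fun t : ℝ => t) y
      (hG_cont.mul hf_cont).continuousOn continuous_id.continuousOn, cfc_id' ℝ y]
  have key : (spectrum ℝ y).EqOn (fun t : ℝ => f t * t * f t * t) (fun t : ℝ => t) := by
    intro t ht
    simp only [hf_def, hk_def]
    rcases hspec t ht with h0 | h1
    · simp [h0]
    · have htpos : 0 < t := lt_of_lt_of_le hε h1
      have hmax : max t ε = t := max_eq_left h1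
      rw [hmax]
      obtain ⟨u, hu0, rfl⟩ : ∃ u : ℝ, 0 < u ∧ u * u = t :=
        ⟨Real.sqrt t, Real.sqrt_pos.mpr htpos, Real.mul_self_sqrt htpos.le⟩
      rw [Real.sqrt_mul_self hu0.le]
      field_simp
  have a3 : cfc (fun t : ℝ => f t * t * f t * t) y = y := by
    rw [cfc_congr key, cfc_id' ℝ y]
  have hpy : (e * y * e) * y = y := by rw [← hp_cfc, ← a2, a3]
  have hpq : (e * y * e) * q = e * y * e := by rw [mul_assoc (e * y) e q, heq]
  have hkey : e * y * e = q := by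
    have hfix : (q - e * y * e) * (q - y) = q - e * y * e := by
      rw [sub_mul, mul_sub, mul_sub, hq_idem, hqy, hpy, hpq]
      abel
    have hineq : ‖q - e * y * e‖ ≤ ‖q - e * y * e‖ * r := by
      calc ‖q - e * y * e‖ = ‖(q - e * y * e) * (q - y)‖ := by rw [hfix]
      _ ≤ ‖q - e * y * e‖ * ‖q - y‖ := norm_mul_le _ _
      _ = ‖q - e * y * e‖ * r := by rw [norm_sub_rev q y, ← hr_def]
    have hzero : q - e * y * e = 0 := by
      by_contra hne
      have hpos : 0 < ‖q - e * y * e‖ := norm_pos_iff.mpr hne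
      nlinarith
    exact (sub_eq_zero.mp hzero).symm
  -- the square root of x
  set sq : A := cfc Real.sqrt x with hsq_def
  have hsq_sa : IsSelfAdjoint sq := cfc_predicate _ x
  have hsq_mul : sq * sq = x := by
    rw [hsq_def, ← cfc_mul Real.sqrt Real.sqrt x Real.continuous_sqrt.continuousOn
      Real.continuous_sqrt.continuousOn]
    have heqon : (spectrum ℝ x).EqOn (fun t => Real.sqrt t * Real.sqrt t) (fun t : ℝ => t) :=
      fun t ht => Real.mul_self_sqrt (spectrum_nonneg_of_nonneg hx ht)
    rw [cfc_congr heqon, cfc_id' ℝ x]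
  set s : A := sq * e with hs_def
  have hstar : star s = e * sq := by rw [hs_def, star_mul, he_sa.star_eq, hsq_sa.star_eq]
  have hexe : e * x * e = q := by
    have h1 : e * x * e = e * y * e := by
      rw [hy_def]
      calc e * x * e = (e * q) * x * (q * e) := by rw [heq, hqe]
      _ = e * (q * x * q) * e := by simp only [mul_assoc]
    rw [h1, hkey]
  have hss : star s * s = q := by
    rw [hstar, hs_def, show e * sq * (sq * e) = e * (sq * sq) * e by simp only [mul_assoc],
      hsq_mul, hexe]
  have hsq2 : s * q = s := by rw [hs_def, mul_assoc, heq]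
  have hproj : (s * star s) * (s * star s) = s * star s := by
    calc (s * star s) * (s * star s) = s * (star s * s) * star s := by simp only [mul_assoc]
    _ = s * q * star s := by rw [hss]
    _ = s * star s := by rw [hsq2]
  have hsa : IsSelfAdjoint (s * star s) := by
    have : star (s * star s) = s * star s := by rw [star_mul, star_star]
    exact this
  have hmem : s * star s ∈
      closure ((Submodule.span ℂ {z : A | ∃ a : A, z = x * a * x} : Submodule ℂ A) : Set A) := by
    have hss' : s * star s = sq * (e * e) * sq := by
      rw [hs_def, hstar]; simp only [mul_assoc]
    rw [hss']
    set c : A := e * e with hc_def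
    set g : ℕ → ℝ → ℝ := fun n t => (Real.sqrt (max t (1/((n:ℝ)+1))))⁻¹ with hg_def
    have hg_cont : ∀ n, Continuous (g n) := by
      intro n
      have hn : (0:ℝ) < 1/((n:ℝ)+1) := by positivity
      have hmaxc : Continuous fun t : ℝ => max t (1/((n:ℝ)+1)) := continuous_id.max continuous_const
      rw [hg_def]
      exact (Real.continuous_sqrt.comp hmaxc).inv₀ fun t =>
        (Real.sqrt_pos.mpr (lt_of_lt_of_le hn (le_max_right _ _))).ne'
    set w : ℕ → A := fun n => cfc (g n) x with hw_def
    set z : ℕ → A := fun n => cfc (fun t => t * g n t) x with hz_def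
    have hz_r : ∀ n, z n = x * w n := fun n => by
      simp only [hz_def, hw_def]
      rw [cfc_mul (fun t : ℝ => t) (g n) x continuous_id.continuousOn (hg_cont n).continuousOn,
        cfc_id' ℝ x]
    have hz_l : ∀ n, z n = w n * x := fun n => by
      simp only [hz_def, hw_def]
      rw [show (fun t : ℝ => t * g n t) = fun t => g n t * t from funext fun t => mul_comm _ _,
        cfc_mul (g n) (fun t : ℝ => t) x (hg_cont n).continuousOn continuous_id.continuousOn,
        cfc_id' ℝ x]
    have hbound : ∀ n, ‖z n - sq‖ ≤ 2 * Real.sqrt (1/((n:ℝ)+1)) := by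
      intro n
      have hη : (0:ℝ) < 1/((n:ℝ)+1) := by positivity
      have hdiff : z n - sq = cfc (fun t => t * g n t - Real.sqrt t) x := by
        simp only [hz_def, hsq_def]
        rw [cfc_sub (fun t : ℝ => t * g n t) Real.sqrt x
          (continuous_id.mul (hg_cont n)).continuousOn Real.continuous_sqrt.continuousOn]
      rw [hdiff]
      refine norm_cfc_le (by positivity) fun t ht => ?_
      have ht0 : 0 ≤ t := spectrum_nonneg_of_nonneg hx ht
      simp only [hg_def]
      rw [Real.norm_eq_abs]
      rcases le_or_gt (1/((n:ℝ)+1)) t with hcase | hcase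
      · rw [max_eq_left hcase,
          show t * (Real.sqrt t)⁻¹ = t / Real.sqrt t from (div_eq_mul_inv _ _).symm,
          Real.div_sqrt, sub_self, abs_zero]
        positivity
      · rw [max_eq_right hcase.le]
        have h1 : 0 ≤ Real.sqrt (1/((n:ℝ)+1)) := Real.sqrt_nonneg _
        have hsqηpos : 0 < Real.sqrt (1/((n:ℝ)+1)) := Real.sqrt_pos.mpr hη
        have hsqη : Real.sqrt (1/((n:ℝ)+1)) * Real.sqrt (1/((n:ℝ)+1)) = 1/((n:ℝ)+1) :=
          Real.mul_self_sqrt hη.le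
        have h2 : Real.sqrt t ≤ Real.sqrt (1/((n:ℝ)+1)) := Real.sqrt_le_sqrt hcase.le
        have h3 : t * (Real.sqrt (1/((n:ℝ)+1)))⁻¹ ≤ Real.sqrt (1/((n:ℝ)+1)) := by
          rw [← div_eq_mul_inv, div_le_iff₀ hsqηpos, hsqη]
          exact hcase.le
        have h4 : 0 ≤ t * (Real.sqrt (1/((n:ℝ)+1)))⁻¹ := by positivity
        rw [abs_le]
        constructor <;> [linarith [Real.sqrt_nonneg t]; linarith [Real.sqrt_nonneg t]]
    have hlim0 : Filter.Tendsto (fun n : ℕ => 2 * Real.sqrt (1/((n:ℝ)+1)))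
        Filter.atTop (nhds 0) := by
      have h1 : Filter.Tendsto (fun n : ℕ => 1/((n:ℝ)+1)) Filter.atTop (nhds 0) :=
        tendsto_one_div_add_atTop_nhds_zero_nat
      have h2 := (Real.continuous_sqrt.tendsto 0).comp h1
      rw [Real.sqrt_zero] at h2
      simpa using h2.const_mul 2
    have hz_lim : Filter.Tendsto z Filter.atTop (nhds sq) := by
      rw [tendsto_iff_norm_sub_tendsto_zero]
      exact squeeze_zero (fun n => norm_nonneg _) hbound hlim0
    have hfull : Filter.Tendsto (fun n => z n * c * z n) Filter.atTop (nhds (sq * c * sq)) :=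
      (hz_lim.mul tendsto_const_nhds).mul hz_lim
    refine mem_closure_of_tendsto hfull (Filter.Eventually.of_forall fun n => ?_)
    have hform : z n * c * z n = x * (w n * c * w n) * x := by
      nth_rewrite 1 [hz_r n]
      rw [hz_l n]
      simp only [mul_assoc]
    rw [hform]
    exact Submodule.subset_span ⟨w n * c * w n, rfl⟩
  exact ⟨s, hss, hsa, hproj, hmem⟩
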